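/- Deviation scheduling theorem: under the same hypotheses (R = B ⊕ DC, Tr(R) ≤ 0, s⁻ = f⁻C ⊕ h⁻, s⁻R*g ≤ 0, C column-regular, f, h regular), the minimum of x⁻ 1 1ᵀ x (= max_i x_i − min_i x_i) over regular x with Bx ≤ x, D(Cx) ≤ x, g ≤ x ≤ h, Cx ≤ f equals θ = ⊕_{0≤i+j≤n−2} ‖s⁻R^i‖·‖R^j g‖ ⊕ ‖R*‖. -/

import Mathlib

noncomputable section
abbrev T := WithBot ℝ

/-- Tropical (max-plus) sum over a finite family. -/
def tSum {n : ℕ} (f : Fin n → T) : T := Finset.univ.sup f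

/-- Tropical matrix product. -/
def tMulM {m n p : ℕ} (A : Matrix (Fin m) (Fin n) T) (B : Matrix (Fin n) (Fin p) T) :
    Matrix (Fin m) (Fin p) T := fun i j => tSum fun k => A i k + B k j

/-- Tropical identity matrix. -/
def tId (n : ℕ) : Matrix (Fin n) (Fin n) T := fun i j => if i = j then (0 : T) else ⊥

/-- Tropical matrix power. -/
def tpow {n : ℕ} (A : Matrix (Fin n) (Fin n) T) : ℕ → Matrix (Fin n) (Fin n) T
  | 0 => tId n
  | k + 1 => tMulM (tpow A k) A

/-- Tropical trace. -/
def tTr {n : ℕ} (A : Matrix (Fin n) (Fin n) T) : T := tSum fun k => A k k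

/-- Multiplicative conjugate of a scalar: negation on finite entries, -∞ ↦ -∞. -/
def tconj (t : T) : T := WithBot.map (fun a : ℝ => -a) t

/-- Kleene star (for an n×n matrix): I ⊕ A ⊕ ⋯ ⊕ A^(n-1). -/
def kstar {n : ℕ} (A : Matrix (Fin n) (Fin n) T) : Matrix (Fin n) (Fin n) T :=
  fun i j => tSum fun k : Fin n => tpow A (k : ℕ) i j

/-- Tr(A) = tr A ⊕ ⋯ ⊕ tr Aⁿ. -/
def TrB {n : ℕ} (A : Matrix (Fin n) (Fin n) T) : T := tSum fun k : Fin n => tTr (tpow A ((k : ℕ) + 1))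

/-- Tropical root: t^{1/k} = t/k. -/
def tdiv (t : T) (k : ℕ) : T := WithBot.map (fun a : ℝ => a / k) t

/-- Row vector × matrix × column vector. -/
def vMv {n : ℕ} (u : Fin n → T) (A : Matrix (Fin n) (Fin n) T) (v : Fin n → T) : T :=
  tSum fun i => u i + tSum fun j => A i j + v j

/-- Pairs (i,j) of exponents with 0 ≤ i + j ≤ n − 2. -/
def pairSet (n : ℕ) : Finset (ℕ × ℕ) :=
  (Finset.range n ×ˢ Finset.range n).filter (fun ij => ij.1 + ij.2 + 2 ≤ n)

namespace TDS

lemma add_max_left (a b c : T) : a + max b c = max (a + b) (a + c) := by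
  have hm : Monotone (a + ·) := fun _ _ h => add_le_add_right h a
  exact hm.map_max

lemma max_add_right (a b c : T) : max a b + c = max (a + c) (b + c) := by
  have hm : Monotone (· + c) := fun _ _ h => add_le_add_left h c
  exact hm.map_max

lemma sup_add_left {α : Type*} (s : Finset α) (f : α → T) (c : T) :
    c + s.sup f = s.sup fun i => c + f i := by
  apply le_antisymm
  · rcases eq_or_ne (s.sup f) ⊥ with h | h
    · simp [h]
    · have hne : s.Nonempty := by
        rcases s.eq_empty_or_nonempty with h' | h'
        · exact absurd (by simp [h']) h
        · exact h'
      obtain ⟨i, hi, heq⟩ := Finset.exists_mem_eq_sup s hne f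
      rw [heq]
      exact Finset.le_sup (f := fun i => c + f i) hi
  · exact Finset.sup_le fun i hi => add_le_add_right (Finset.le_sup hi) c

lemma sup_add_right {α : Type*} (s : Finset α) (f : α → T) (c : T) :
    s.sup f + c = s.sup fun i => f i + c := by
  rw [add_comm, sup_add_left]; simp [add_comm]

lemma tSum_le {n : ℕ} {f : Fin n → T} {c : T} (h : ∀ i, f i ≤ c) : tSum f ≤ c :=
  Finset.sup_le fun i _ => h i

lemma le_tSum {n : ℕ} (f : Fin n → T) (i : Fin n) : f i ≤ tSum f :=
  Finset.le_sup (Finset.mem_univ i)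

lemma tSum_mono {n : ℕ} {f g : Fin n → T} (h : ∀ i, f i ≤ g i) : tSum f ≤ tSum g :=
  tSum_le fun i => (h i).trans (le_tSum g i)

lemma tSum_add_left {n : ℕ} (c : T) (f : Fin n → T) :
    c + tSum f = tSum fun i => c + f i := sup_add_left _ _ _

lemma tSum_add_right {n : ℕ} (f : Fin n → T) (c : T) :
    tSum f + c = tSum fun i => f i + c := sup_add_right _ _ _

lemma tSum_comm {n m : ℕ} (f : Fin n → Fin m → T) :
    tSum (fun i => tSum fun j => f i j) = tSum fun j => tSum fun i => f i j :=
  Finset.sup_comm _ _ _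

lemma tMulM_tId {m n : ℕ} (A : Matrix (Fin m) (Fin n) T) : tMulM A (tId n) = A := by
  funext i j
  show tSum (fun k => A i k + tId n k j) = A i j
  apply le_antisymm
  · apply Finset.sup_le
    intro k _
    by_cases h : k = j
    · subst h; simp [tId]
    · simp [tId, h]
  · refine le_trans ?_ (Finset.le_sup (Finset.mem_univ j))
    simp [tId]

lemma tId_tMulM {m n : ℕ} (A : Matrix (Fin m) (Fin n) T) : tMulM (tId m) A = A := by
  funext i j
  show tSum (fun k => tId m i k + A k j) = A i j
  apply le_antisymm
  · apply Finset.sup_le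
    intro k _
    by_cases h : i = k
    · subst h; simp [tId]
    · simp [tId, h]
  · refine le_trans ?_ (Finset.le_sup (Finset.mem_univ i))
    simp [tId]

lemma tMulM_assoc {m n p q : ℕ} (A : Matrix (Fin m) (Fin n) T)
    (B : Matrix (Fin n) (Fin p) T) (C : Matrix (Fin p) (Fin q) T) :
    tMulM (tMulM A B) C = tMulM A (tMulM B C) := by
  funext i j
  show tSum (fun k => tSum (fun l => A i l + B l k) + C k j)
      = tSum fun l => A i l + tSum fun k => B l k + C k j
  calc tSum (fun k => tSum (fun l => A i l + B l k) + C k j)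
      = tSum fun k => tSum fun l => (A i l + B l k) + C k j := by
        simp only [tSum_add_right]
    _ = tSum fun l => tSum fun k => (A i l + B l k) + C k j := tSum_comm _
    _ = tSum fun l => A i l + tSum fun k => B l k + C k j := by
        congr 1; funext l
        rw [tSum_add_left]
        simp only [add_assoc]

lemma tpow_succ_left {n : ℕ} (A : Matrix (Fin n) (Fin n) T) (k : ℕ) :
    tpow A (k + 1) = tMulM A (tpow A k) := by
  induction k with
  | zero => show tMulM (tId n) A = tMulM A (tId n); rw [tMulM_tId, tId_tMulM]
  | succ k ih =>
      show tMulM (tpow A (k+1)) A = tMulM A (tMulM (tpow A k) A)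
      rw [ih, tMulM_assoc]

def vApp {n m : ℕ} (A : Matrix (Fin n) (Fin m) T) (x : Fin m → T) : Fin n → T :=
  fun i => tSum fun j => A i j + x j

lemma vApp_assoc {m n p : ℕ} (A : Matrix (Fin m) (Fin n) T)
    (B : Matrix (Fin n) (Fin p) T) (x : Fin p → T) :
    vApp (tMulM A B) x = vApp A (vApp B x) := by
  funext i
  show tSum (fun j => tSum (fun k => A i k + B k j) + x j)
      = tSum fun k => A i k + tSum fun j => B k j + x j
  calc tSum (fun j => tSum (fun k => A i k + B k j) + x j)
      = tSum fun j => tSum fun k => (A i k + B k j) + x j := by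
        simp only [tSum_add_right]
    _ = tSum fun k => tSum fun j => (A i k + B k j) + x j := tSum_comm _
    _ = tSum fun k => A i k + tSum fun j => B k j + x j := by
        congr 1; funext k
        rw [tSum_add_left]
        simp only [add_assoc]

lemma vApp_mono_vec {n m : ℕ} (A : Matrix (Fin n) (Fin m) T) {x y : Fin m → T}
    (h : ∀ j, x j ≤ y j) (i : Fin n) : vApp A x i ≤ vApp A y i :=
  tSum_mono fun j => add_le_add_right (h j) _

lemma vApp_mono_mat {n m : ℕ} {A B : Matrix (Fin n) (Fin m) T}
    (h : ∀ i j, A i j ≤ B i j) (x : Fin m → T) (i : Fin n) : vApp A x i ≤ vApp B x i :=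
  tSum_mono fun j => add_le_add_left (h i j) _

end TDS
namespace TDS

variable {n : ℕ}

/-- Weight of the walk that starts at `a` and then visits the vertices of `L` in order. -/
def wt (A : Matrix (Fin n) (Fin n) T) : Fin n → List (Fin n) → T
  | _, [] => 0
  | a, b :: rest => A a b + wt A b rest

/-- Endpoint of the walk starting at `a` with subsequent vertices `L`. -/
def ep : Fin n → List (Fin n) → Fin n
  | a, [] => a
  | _, b :: rest => ep b rest

lemma wt_append (A : Matrix (Fin n) (Fin n) T) (a : Fin n) (L1 L2 : List (Fin n)) :
    wt A a (L1 ++ L2) = wt A a L1 + wt A (ep a L1) L2 := by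
  induction L1 generalizing a with
  | nil => simp [wt, ep]
  | cons b rest ih => simp [wt, ep, ih b, add_assoc]

lemma ep_append (a : Fin n) (L1 L2 : List (Fin n)) :
    ep a (L1 ++ L2) = ep (ep a L1) L2 := by
  induction L1 generalizing a with
  | nil => simp [ep]
  | cons b rest ih => simp [ep, ih b]

lemma wt_le_pow (A : Matrix (Fin n) (Fin n) T) :
    ∀ (L : List (Fin n)) (a : Fin n), wt A a L ≤ tpow A L.length a (ep a L)
  | [], a => by simp [wt, ep, tpow, tId]
  | b :: rest, a => by
    show A a b + wt A b rest ≤ tpow A (rest.length + 1) a (ep b rest)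
    rw [tpow_succ_left]
    calc A a b + wt A b rest ≤ A a b + tpow A rest.length b (ep b rest) :=
          add_le_add_right (wt_le_pow A rest b) _
      _ ≤ _ := le_tSum (fun k => A a k + tpow A rest.length k (ep b rest)) b

lemma pow_le_walk (A : Matrix (Fin n) (Fin n) T) (k : ℕ) (a : Fin n) :
    ∀ b : Fin n, tpow A k a b ≠ ⊥ →
    ∃ L : List (Fin n), L.length = k ∧ ep a L = b ∧ tpow A k a b ≤ wt A a L := by
  induction k with
  | zero =>
    intro b h
    have hab : a = b := by
      by_contra hne
      exact h (by simp [tpow, tId, hne])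
    subst hab
    exact ⟨[], rfl, rfl, by simp [tpow, tId, wt]⟩
  | succ k ih =>
    intro b h
    have hne : (Finset.univ : Finset (Fin n)).Nonempty := ⟨a, Finset.mem_univ a⟩
    obtain ⟨c, -, hc⟩ := Finset.exists_mem_eq_sup Finset.univ hne
      (fun c => tpow A k a c + A c b)
    have hsup : tpow A (k+1) a b = tpow A k a c + A c b := hc
    have h1 : tpow A k a c ≠ ⊥ := by
      intro hb
      rw [hsup, hb] at h
      simp at h
    obtain ⟨L, hlen, hep, hle⟩ := ih c h1
    refine ⟨L ++ [b], by simp [hlen], by rw [ep_append, hep]; rfl, ?_⟩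
    rw [wt_append, hep, hsup]
    exact add_le_add hle (by simp [wt])

/-- Cutting out a loop between positions `pp < pp'` of a walk. -/
lemma cut (A : Matrix (Fin n) (Fin n) T) (a : Fin n) (L : List (Fin n)) (pp pp' : ℕ)
    (hlt : pp < pp') (hle : pp' ≤ L.length)
    (hv : ep a (L.take pp) = ep a (L.take pp')) :
    ∃ seg : List (Fin n), seg.length = pp' - pp ∧ seg ≠ [] ∧
      ep (ep a (L.take pp')) seg = ep a (L.take pp') ∧
      wt A a L = wt A a (L.take pp ++ L.drop pp') + wt A (ep a (L.take pp')) seg ∧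
      ep a (L.take pp ++ L.drop pp') = ep a L ∧
      (L.take pp ++ L.drop pp').length = L.length - (pp' - pp) := by
  set v := ep a (L.take pp') with hvdef
  set seg := (L.take pp').drop pp with hseg
  have htt : (L.take pp').take pp = L.take pp := by
    rw [List.take_take, min_eq_left hlt.le]
  have hdec : L.take pp ++ seg = L.take pp' := by
    rw [← htt, hseg, List.take_append_drop]
  have hlseg : seg.length = pp' - pp := by
    rw [hseg, List.length_drop, List.length_take, min_eq_left hle]
  have hsegne : seg ≠ [] := by
    intro h
    rw [h] at hlseg
    simp at hlseg
    omega
  have hepseg : ep v seg = v := by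
    conv_rhs => rw [hvdef, ← hdec]
    rw [ep_append, hv, hvdef]
  have hLdec : L = L.take pp' ++ L.drop pp' := (List.take_append_drop pp' L).symm
  have hwtL : wt A a L = (wt A a (L.take pp) + wt A v seg) + wt A v (L.drop pp') := by
    conv_lhs => rw [hLdec]
    rw [wt_append]
    congr 1
    conv_lhs => rw [← hdec]
    rw [wt_append, hv]
  have hwtL' : wt A a (L.take pp ++ L.drop pp') = wt A a (L.take pp) + wt A v (L.drop pp') := by
    rw [wt_append, hv]
  refine ⟨seg, hlseg, hsegne, hepseg, ?_, ?_, ?_⟩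
  · rw [hwtL, hwtL', add_right_comm]
  · rw [ep_append, hv]
    conv_rhs => rw [hLdec, ep_append]
  · rw [List.length_append, List.length_take, List.length_drop, min_eq_left (by omega)]
    omega

lemma closed_walk_nonpos (R : Matrix (Fin n) (Fin n) T) (hTr : TrB R ≤ 0) :
    ∀ k (a : Fin n) (L : List (Fin n)), L.length = k → 0 < k → ep a L = a → wt R a L ≤ 0 := by
  intro k
  induction k using Nat.strong_induction_on with
  | _ k ih =>
  intro a L hlen hpos hep
  by_cases hk : k ≤ n
  · -- short closed walk: weight ≤ entry of R^k ≤ trace ≤ TrB ≤ 0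
    have h1 : wt R a L ≤ tpow R k a a := by
      have := wt_le_pow R L a
      rw [hlen, hep] at this
      exact this
    have hfin : k - 1 < n := by omega
    have h2 : tpow R k a a ≤ tTr (tpow R k) := le_tSum (fun j => tpow R k j j) a
    have h3 : tTr (tpow R k) ≤ TrB R := by
      have := le_tSum (fun j : Fin n => tTr (tpow R ((j : ℕ) + 1))) ⟨k - 1, hfin⟩
      simpa [TrB, show k - 1 + 1 = k by omega] using this
    exact h1.trans (h2.trans (h3.trans hTr))
  · -- long walk: pigeonhole
    have hcard : Fintype.card (Fin n) < Fintype.card (Fin k) := by simp; omega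
    obtain ⟨x, y, hxy, hF⟩ :=
      Fintype.exists_ne_map_eq_of_card_lt (fun t : Fin k => ep a (L.take t)) hcard
    obtain ⟨p, p', hlt, hfeq⟩ : ∃ p p' : Fin k, (p : ℕ) < (p' : ℕ) ∧
        ep a (L.take p) = ep a (L.take p') := by
      rcases lt_or_gt_of_ne hxy with h | h
      · exact ⟨x, y, h, hF⟩
      · exact ⟨y, x, h, hF.symm⟩
    obtain ⟨seg, hlseg, hsegne, hepseg, hwt, hepL', hlenL'⟩ :=
      cut R a L p p' hlt (by omega) hfeq
    have hseg0 : wt R (ep a (L.take p')) seg ≤ 0 := by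
      refine ih _ (by omega) _ seg rfl ?_ hepseg
      rw [hlseg]; omega
    have hL'0 : wt R a (L.take p ++ L.drop p') ≤ 0 := by
      refine ih _ ?_ _ _ rfl ?_ (by rw [hepL', hep])
      · rw [hlenL', hlen]
        have := p'.isLt
        omega
      · rw [hlenL', hlen]
        have := p'.isLt
        omega
    rw [hwt]
    exact add_nonpos hL'0 hseg0

lemma pow_le_kstar (R : Matrix (Fin n) (Fin n) T) (hTr : TrB R ≤ 0) :
    ∀ k (a b : Fin n), tpow R k a b ≤ kstar R a b := by
  intro k
  induction k using Nat.strong_induction_on with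
  | _ k ih =>
  intro a b
  by_cases hk : k < n
  · exact le_tSum (fun j : Fin n => tpow R (j : ℕ) a b) ⟨k, hk⟩
  · rcases eq_or_ne (tpow R k a b) ⊥ with hbot | hbot
    · simp [hbot]
    obtain ⟨L, hlen, hep, hle⟩ := pow_le_walk R k a b hbot
    have hcard : Fintype.card (Fin n) < Fintype.card (Fin (k+1)) := by simp; omega
    obtain ⟨x, y, hxy, hF⟩ :=
      Fintype.exists_ne_map_eq_of_card_lt (fun t : Fin (k+1) => ep a (L.take t)) hcard
    obtain ⟨p, p', hlt, hfeq⟩ : ∃ p p' : Fin (k+1), (p : ℕ) < (p' : ℕ) ∧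
        ep a (L.take p) = ep a (L.take p') := by
      rcases lt_or_gt_of_ne hxy with h | h
      · exact ⟨x, y, h, hF⟩
      · exact ⟨y, x, h, hF.symm⟩
    obtain ⟨seg, hlseg, hsegne, hepseg, hwt, hepL', hlenL'⟩ :=
      cut R a L p p' hlt (by omega) hfeq
    have hseg0 : wt R (ep a (L.take p')) seg ≤ 0 := by
      refine closed_walk_nonpos R hTr _ _ seg rfl ?_ hepseg
      rw [hlseg]; omega
    have h1 : tpow R k a b ≤ wt R a (L.take p ++ L.drop p') := by
      calc tpow R k a b ≤ wt R a L := hle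
        _ = wt R a (L.take p ++ L.drop p') + wt R (ep a (L.take p')) seg := hwt
        _ ≤ wt R a (L.take p ++ L.drop p') + 0 := add_le_add_right hseg0 _
        _ = _ := add_zero _
    have h2 := wt_le_pow R (L.take p ++ L.drop p') a
    rw [hepL', hep] at h2
    refine h1.trans (h2.trans (ih _ ?_ a b))
    rw [hlenL', hlen]
    have := p'.isLt
    omega

end TDS
namespace TDS

variable {n : ℕ}

/-- Key lemma: a product of two matrix-power entries is dominated either by a pair with
small total exponent, or by a "cross" product of Kleene star entries. -/
lemma pairB (R : Matrix (Fin n) (Fin n) T) (hTr : TrB R ≤ 0) :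
    ∀ (N i j : ℕ), i + j = N → ∀ (m l a b : Fin n),
      tpow R i m l + tpow R j a b ≤
        max ((pairSet n).sup fun pq => tpow R pq.1 m l + tpow R pq.2 a b)
            (kstar R m b + kstar R a l) := by
  intro N
  induction N using Nat.strong_induction_on with
  | _ N ih =>
  intro i j hij m l a b
  by_cases hn : i + j + 2 ≤ n
  · refine le_trans ?_ (le_max_left _ _)
    refine Finset.le_sup (f := fun pq : ℕ × ℕ => tpow R pq.1 m l + tpow R pq.2 a b)
      (?_ : (i, j) ∈ pairSet n)
    simp only [pairSet, Finset.mem_filter, Finset.mem_product, Finset.mem_range]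
    omega
  · rcases eq_or_ne (tpow R i m l) ⊥ with hbot | hbot
    · simp [hbot]
    rcases eq_or_ne (tpow R j a b) ⊥ with hbot2 | hbot2
    · simp [hbot2]
    obtain ⟨L1, hlen1, hep1, hle1⟩ := pow_le_walk R i m l hbot
    obtain ⟨L2, hlen2, hep2, hle2⟩ := pow_le_walk R j a b hbot2
    have hcard : Fintype.card (Fin n) < Fintype.card (Fin (i+1) ⊕ Fin (j+1)) := by
      simp only [Fintype.card_sum, Fintype.card_fin]
      omega
    obtain ⟨x, y, hxy, hF⟩ := Fintype.exists_ne_map_eq_of_card_lt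
      (fun t : Fin (i+1) ⊕ Fin (j+1) =>
        Sum.rec (fun t => ep m (L1.take t)) (fun t => ep a (L2.take t)) t) hcard
    -- helper for the "cycle inside one walk" case, stated for L1 (first factor);
    -- a symmetric argument handles L2.
    have cutcase : ∀ (p p' : ℕ), p < p' → p' ≤ i →
        ep m (L1.take p) = ep m (L1.take p') →
        tpow R i m l + tpow R j a b ≤
          max ((pairSet n).sup fun pq : ℕ × ℕ => tpow R pq.1 m l + tpow R pq.2 a b)
              (kstar R m b + kstar R a l) := by
      intro p p' hlt hple hfeq
      obtain ⟨seg, hlseg, hsegne, hepseg, hwt, hepL', hlenL'⟩ :=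
        cut R m L1 p p' hlt (by omega) hfeq
      have hseg0 : wt R (ep m (L1.take p')) seg ≤ 0 :=
        closed_walk_nonpos R hTr _ _ seg rfl (by rw [hlseg]; omega) hepseg
      have h1 : tpow R i m l ≤ wt R m (L1.take p ++ L1.drop p') := by
        calc tpow R i m l ≤ wt R m L1 := hle1
          _ = wt R m (L1.take p ++ L1.drop p') + wt R (ep m (L1.take p')) seg := hwt
          _ ≤ wt R m (L1.take p ++ L1.drop p') + 0 := add_le_add_right hseg0 _
          _ = _ := add_zero _
      have h2 := wt_le_pow R (L1.take p ++ L1.drop p') m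
      rw [hepL', hep1] at h2
      have h3 : tpow R i m l + tpow R j a b ≤
          tpow R ((L1.take p ++ L1.drop p').length) m l + tpow R j a b :=
        add_le_add_left (h1.trans h2) _
      refine h3.trans (ih _ ?_ _ _ rfl m l a b)
      rw [hlenL', hlen1]
      omega
    -- symmetric helper for L2
    have cutcase2 : ∀ (p p' : ℕ), p < p' → p' ≤ j →
        ep a (L2.take p) = ep a (L2.take p') →
        tpow R i m l + tpow R j a b ≤
          max ((pairSet n).sup fun pq : ℕ × ℕ => tpow R pq.1 m l + tpow R pq.2 a b)
              (kstar R m b + kstar R a l) := by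
      intro p p' hlt hple hfeq
      obtain ⟨seg, hlseg, hsegne, hepseg, hwt, hepL', hlenL'⟩ :=
        cut R a L2 p p' hlt (by omega) hfeq
      have hseg0 : wt R (ep a (L2.take p')) seg ≤ 0 :=
        closed_walk_nonpos R hTr _ _ seg rfl (by rw [hlseg]; omega) hepseg
      have h1 : tpow R j a b ≤ wt R a (L2.take p ++ L2.drop p') := by
        calc tpow R j a b ≤ wt R a L2 := hle2
          _ = wt R a (L2.take p ++ L2.drop p') + wt R (ep a (L2.take p')) seg := hwt
          _ ≤ wt R a (L2.take p ++ L2.drop p') + 0 := add_le_add_right hseg0 _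
          _ = _ := add_zero _
      have h2 := wt_le_pow R (L2.take p ++ L2.drop p') a
      rw [hepL', hep2] at h2
      have h3 : tpow R i m l + tpow R j a b ≤
          tpow R i m l + tpow R ((L2.take p ++ L2.drop p').length) a b :=
        add_le_add_right (h1.trans h2) _
      refine h3.trans (ih _ ?_ _ _ rfl m l a b)
      rw [hlenL', hlen2]
      omega
    -- cross case
    have crosscase : ∀ (p q : ℕ), p ≤ i → q ≤ j →
        ep m (L1.take p) = ep a (L2.take q) →
        tpow R i m l + tpow R j a b ≤
          max ((pairSet n).sup fun pq : ℕ × ℕ => tpow R pq.1 m l + tpow R pq.2 a b)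
              (kstar R m b + kstar R a l) := by
      intro p q hpi hqj hv
      have hw1 : wt R m L1 = wt R m (L1.take p) + wt R (ep m (L1.take p)) (L1.drop p) := by
        conv_lhs => rw [← List.take_append_drop p L1]
        rw [wt_append]
      have hw2 : wt R a L2 = wt R a (L2.take q) + wt R (ep a (L2.take q)) (L2.drop q) := by
        conv_lhs => rw [← List.take_append_drop q L2]
        rw [wt_append]
      have hcross1 : wt R m (L1.take p ++ L2.drop q)
          = wt R m (L1.take p) + wt R (ep m (L1.take p)) (L2.drop q) := wt_append _ _ _ _
      have hcross2 : wt R a (L2.take q ++ L1.drop p)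
          = wt R a (L2.take q) + wt R (ep a (L2.take q)) (L1.drop p) := wt_append _ _ _ _
      have hepc1 : ep m (L1.take p ++ L2.drop q) = b := by
        rw [ep_append, hv, ← ep_append, List.take_append_drop, hep2]
      have hepc2 : ep a (L2.take q ++ L1.drop p) = l := by
        rw [ep_append, ← hv, ← ep_append, List.take_append_drop, hep1]
      have key : wt R m L1 + wt R a L2
          = wt R m (L1.take p ++ L2.drop q) + wt R a (L2.take q ++ L1.drop p) := by
        rw [hw1, hw2, hcross1, hcross2, hv]
        abel
      have hb1 := wt_le_pow R (L1.take p ++ L2.drop q) m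
      rw [hepc1] at hb1
      have hb2 := wt_le_pow R (L2.take q ++ L1.drop p) a
      rw [hepc2] at hb2
      refine le_trans ?_ (le_max_right _ _)
      calc tpow R i m l + tpow R j a b ≤ wt R m L1 + wt R a L2 := add_le_add hle1 hle2
        _ = _ := key
        _ ≤ tpow R _ m b + tpow R _ a l := add_le_add hb1 hb2
        _ ≤ kstar R m b + kstar R a l :=
            add_le_add (pow_le_kstar R hTr _ m b) (pow_le_kstar R hTr _ a l)
    -- case analysis on the pigeonhole collision
    match x, y, hxy, hF with
    | .inl p, .inl p', hxy, hF =>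
      have hne : (p : ℕ) ≠ (p' : ℕ) := fun h => hxy (by rw [Fin.val_injective h])
      rcases lt_or_gt_of_ne hne with hlt | hlt
      · exact cutcase p p' hlt (by omega) hF
      · exact cutcase p' p hlt (by omega) hF.symm
    | .inl p, .inr q, _, hF => exact crosscase p q (by omega) (by omega) hF
    | .inr q, .inl p, _, hF => exact crosscase p q (by omega) (by omega) hF.symm
    | .inr q, .inr q', hxy, hF =>
      have hne : (q : ℕ) ≠ (q' : ℕ) := fun h => hxy (by rw [Fin.val_injective h])
      rcases lt_or_gt_of_ne hne with hlt | hlt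
      · exact cutcase2 q q' hlt (by omega) hF
      · exact cutcase2 q' q hlt (by omega) hF.symm

end TDS
namespace TDS

lemma le_coe_sub {a : T} {u v : ℝ} (h : a + (v : T) ≤ (u : T)) : a ≤ ((u - v : ℝ) : T) := by
  induction a using WithBot.recBotCoe with
  | bot => exact bot_le
  | coe s =>
    rw [← WithBot.coe_add, WithBot.coe_le_coe] at h
    exact WithBot.coe_le_coe.mpr (by linarith)

lemma add_coe_le_zero {a : T} {r : ℝ} (h : a + (r : T) ≤ 0) : a ≤ ((-r : ℝ) : T) := by
  have h' : a + (r : T) ≤ ((0 : ℝ) : T) := by simpa using h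
  simpa using le_coe_sub h'

lemma neg_coe_add_le_zero {a : T} {r : ℝ} (h : ((-r : ℝ) : T) + a ≤ 0) : a ≤ (r : T) := by
  rw [add_comm] at h
  simpa using add_coe_le_zero h

lemma neg_add_cancel_right (a : T) (r : ℝ) : ((-r : ℝ) : T) + a + (r : T) = a := by
  induction a using WithBot.recBotCoe with
  | bot => simp
  | coe s =>
    rw [← WithBot.coe_add, ← WithBot.coe_add]
    norm_num [add_comm]

lemma coe_add_neg_cancel (r : ℝ) : (r : T) + ((-r : ℝ) : T) = 0 := by
  rw [← WithBot.coe_add]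
  norm_num

lemma vApp_tId {n : ℕ} (x : Fin n → T) (i : Fin n) : vApp (tId n) x i = x i := by
  show tSum (fun j => tId n i j + x j) = x i
  apply le_antisymm
  · apply Finset.sup_le
    intro k _
    by_cases h : i = k
    · subst h; simp [tId]
    · simp [tId, h]
  · refine le_trans ?_ (Finset.le_sup (Finset.mem_univ i))
    simp [tId]

end TDS
namespace TDS

variable {n : ℕ}

lemma vApp_pow_le (R : Matrix (Fin n) (Fin n) T) (X : Fin n → T)
    (hRx : ∀ i, vApp R X i ≤ X i) : ∀ k i, vApp (tpow R k) X i ≤ X i := by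
  intro k
  induction k with
  | zero => intro i; exact le_of_eq (vApp_tId X i)
  | succ k ih =>
    intro i
    have he : vApp (tpow R (k+1)) X = vApp (tpow R k) (vApp R X) := by
      rw [show tpow R (k+1) = tMulM (tpow R k) R from rfl, vApp_assoc]
    rw [he]
    exact le_trans (vApp_mono_vec _ hRx i) (ih i)

lemma vApp_kstar_le (R : Matrix (Fin n) (Fin n) T) (X : Fin n → T)
    (hRx : ∀ i, vApp R X i ≤ X i) : ∀ i, vApp (kstar R) X i ≤ X i := by
  intro i
  apply tSum_le
  intro j
  show (tSum fun t : Fin n => tpow R (t : ℕ) i j) + X j ≤ X i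
  rw [tSum_add_right]
  apply tSum_le
  intro t
  exact le_trans (le_tSum (fun j' => tpow R (t : ℕ) i j' + X j') j) (vApp_pow_le R X hRx t i)

lemma mul_kstar_le (R : Matrix (Fin n) (Fin n) T) (hTr : TrB R ≤ 0) (i j : Fin n) :
    tMulM R (kstar R) i j ≤ kstar R i j := by
  show (tSum fun k => R i k + kstar R k j) ≤ kstar R i j
  apply tSum_le
  intro k
  show R i k + (tSum fun t : Fin n => tpow R (t : ℕ) k j) ≤ _
  rw [tSum_add_left]
  apply tSum_le
  intro t
  have h1 : R i k + tpow R (t : ℕ) k j ≤ tpow R ((t : ℕ) + 1) i j := by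
    rw [tpow_succ_left]
    exact le_tSum (fun k' => R i k' + tpow R (t : ℕ) k' j) k
  exact h1.trans (pow_le_kstar R hTr _ i j)

/-- The lower-bound half: every feasible `x` has deviation at least `θ`. -/
lemma lower_bound (B D C : Matrix (Fin n) (Fin n) T)
    (g : Fin n → T) (f h : Fin n → ℝ) (R : Matrix (Fin n) (Fin n) T)
    (hRdef : R = fun i j => max (B i j) (tMulM D C i j))
    (sneg : Fin n → T)
    (hsdef : sneg = fun j =>
      max (tSum fun i => ((-(f i) : ℝ) : T) + C i j) ((-(h j) : ℝ) : T))
    (θ : T)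
    (hθdef : θ = max
      ((pairSet n).sup fun ij =>
        (tSum fun l => tSum fun m => sneg m + tpow R ij.1 m l) +
          (tSum fun a => tSum fun b => tpow R ij.2 a b + g b))
      (tSum fun a => tSum fun b => kstar R a b))
    (x : Fin n → ℝ)
    (hB : ∀ i, tSum (fun j => B i j + (x j : T)) ≤ (x i : T))
    (hD : ∀ i, tSum (fun j => D i j + tSum fun l => C j l + (x l : T)) ≤ (x i : T))
    (hg : ∀ i, g i ≤ (x i : T)) (hh : ∀ i, x i ≤ h i)
    (hf : ∀ i, tSum (fun j => C i j + (x j : T)) ≤ (f i : T)) :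
    θ ≤ (tSum fun i => ((x i : ℝ) : T)) + (tSum fun i => ((-(x i) : ℝ) : T)) := by
  have hRx : ∀ i, vApp R (fun j => ((x j : ℝ) : T)) i ≤ ((x i : ℝ) : T) := by
    intro i
    apply tSum_le
    intro j
    rw [hRdef]
    show max (B i j) (tMulM D C i j) + ((x j : ℝ) : T) ≤ _
    rw [max_add_right]
    apply max_le
    · exact le_trans (le_tSum (fun j' => B i j' + ((x j' : ℝ) : T)) j) (hB i)
    · refine le_trans (le_tSum (fun j' => tMulM D C i j' + ((x j' : ℝ) : T)) j) ?_
      have he : vApp (tMulM D C) (fun l => ((x l : ℝ) : T)) i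
          = vApp D (vApp C (fun l => ((x l : ℝ) : T))) i := by rw [vApp_assoc]
      exact le_of_eq_of_le he (hD i)
  have hpow := vApp_pow_le R _ hRx
  have hstar := vApp_kstar_le R _ hRx
  have hsx : ∀ j, sneg j + ((x j : ℝ) : T) ≤ 0 := by
    intro j
    rw [hsdef]
    show max (tSum fun i => ((-(f i) : ℝ) : T) + C i j) ((-(h j) : ℝ) : T) + _ ≤ _
    rw [max_add_right]
    apply max_le
    · rw [tSum_add_right]
      apply tSum_le
      intro i
      have h5 : C i j + ((x j : ℝ) : T) ≤ ((f i : ℝ) : T) :=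
        le_trans (le_tSum (fun j' => C i j' + ((x j' : ℝ) : T)) j) (hf i)
      calc ((-(f i) : ℝ) : T) + C i j + ((x j : ℝ) : T)
          = ((-(f i) : ℝ) : T) + (C i j + ((x j : ℝ) : T)) := add_assoc _ _ _
        _ ≤ ((-(f i) : ℝ) : T) + ((f i : ℝ) : T) := add_le_add_right h5 _
        _ = 0 := by rw [← WithBot.coe_add]; norm_num
    · rw [← WithBot.coe_add]
      have : -(h j) + x j ≤ (0 : ℝ) := by linarith [hh j]
      exact le_trans (WithBot.coe_le_coe.mpr this) (by norm_num)
  rw [hθdef]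
  apply max_le
  · apply Finset.sup_le
    rintro ⟨p, q⟩ hpq
    show (tSum fun l => tSum fun m => sneg m + tpow R p m l) +
        (tSum fun a => tSum fun b => tpow R q a b + g b) ≤ _
    rw [add_comm (tSum fun i => ((x i : ℝ) : T))]
    refine add_le_add ?_ ?_
    · apply tSum_le
      intro l
      apply tSum_le
      intro m
      have h1 : tpow R p m l + ((x l : ℝ) : T) ≤ ((x m : ℝ) : T) :=
        le_trans (le_tSum (fun l' => tpow R p m l' + ((x l' : ℝ) : T)) l) (hpow p m)
      have h3 : sneg m + tpow R p m l + ((x l : ℝ) : T) ≤ 0 := by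
        rw [add_assoc]
        exact le_trans (add_le_add_right h1 _) (hsx m)
      exact le_trans (add_coe_le_zero h3) (le_tSum (fun i => ((-(x i) : ℝ) : T)) l)
    · apply tSum_le
      intro a
      apply tSum_le
      intro b
      have h1 : tpow R q a b + g b ≤ tpow R q a b + ((x b : ℝ) : T) :=
        add_le_add_right (hg b) _
      have h2 : tpow R q a b + ((x b : ℝ) : T) ≤ ((x a : ℝ) : T) :=
        le_trans (le_tSum (fun b' => tpow R q a b' + ((x b' : ℝ) : T)) b) (hpow q a)
      exact ((h1.trans h2).trans (le_tSum (fun i => ((x i : ℝ) : T)) a))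
  · apply tSum_le
    intro a
    apply tSum_le
    intro b
    have h2 : kstar R a b + ((x b : ℝ) : T) ≤ ((x a : ℝ) : T) :=
      le_trans (le_tSum (fun b' => kstar R a b' + ((x b' : ℝ) : T)) b) (hstar a)
    have h3 : kstar R a b ≤ ((x a - x b : ℝ) : T) := le_coe_sub h2
    refine h3.trans ?_
    have he : ((x a - x b : ℝ) : T) = ((x a : ℝ) : T) + ((-(x b) : ℝ) : T) := by
      rw [← WithBot.coe_add]
      ring_nf
    rw [he]
    exact add_le_add (le_tSum (fun i => ((x i : ℝ) : T)) a) (le_tSum (fun i => ((-(x i) : ℝ) : T)) b)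

end TDS
namespace TDS

variable {n : ℕ}

lemma add_sup_add_le {α : Type*} (s : Finset α) (F : α → T) {u v c : T}
    (hb : ∀ i ∈ s, u + F i + v ≤ c) : u + s.sup F + v ≤ c := by
  rcases eq_or_ne (s.sup F) ⊥ with hbot | hbot
  · rw [hbot]
    simp
  · have hne : s.Nonempty := by
      rcases s.eq_empty_or_nonempty with h' | h'
      · exact absurd (by simp [h']) hbot
      · exact h'
    obtain ⟨i, hi, heq⟩ := Finset.exists_mem_eq_sup s hne F
    rw [heq]
    exact hb i hi

lemma key_pair_bound (R : Matrix (Fin n) (Fin n) T) (hTr : TrB R ≤ 0)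
    (sneg g : Fin n → T)
    (hfeas : tSum (fun j => sneg j + tSum fun l => kstar R j l + g l) ≤ 0)
    (θ : T)
    (hpair : ((pairSet n).sup fun ij =>
        (tSum fun l => tSum fun m => sneg m + tpow R ij.1 m l) +
          (tSum fun a => tSum fun b => tpow R ij.2 a b + g b)) ≤ θ)
    (hK : (tSum fun a => tSum fun b => kstar R a b) ≤ θ)
    (p q : ℕ) (m l a b : Fin n) :
    (tpow R q a b + g b) + (sneg m + tpow R p m l) ≤ θ := by
  have hkey := pairB R hTr (p + q) p q rfl m l a b
  have hre : (tpow R q a b + g b) + (sneg m + tpow R p m l)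
      = sneg m + (tpow R p m l + tpow R q a b) + g b := by abel
  rw [hre]
  refine le_trans (add_le_add_left (add_le_add_right hkey _) _) ?_
  rw [add_max_left, max_add_right]
  apply max_le
  · refine add_sup_add_le _ _ ?_
    intro pq hmem
    show sneg m + (tpow R pq.1 m l + tpow R pq.2 a b) + g b ≤ θ
    have hre2 : sneg m + (tpow R pq.1 m l + tpow R pq.2 a b) + g b
        = (sneg m + tpow R pq.1 m l) + (tpow R pq.2 a b + g b) := by abel
    rw [hre2]
    have hA : sneg m + tpow R pq.1 m l
        ≤ tSum fun l' => tSum fun m' => sneg m' + tpow R pq.1 m' l' :=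
      le_trans (le_tSum (fun m' => sneg m' + tpow R pq.1 m' l) m)
        (le_tSum (fun l' => tSum fun m' => sneg m' + tpow R pq.1 m' l') l)
    have hBb : tpow R pq.2 a b + g b
        ≤ tSum fun a' => tSum fun b' => tpow R pq.2 a' b' + g b' :=
      le_trans (le_tSum (fun b' => tpow R pq.2 a b' + g b') b)
        (le_tSum (fun a' => tSum fun b' => tpow R pq.2 a' b' + g b') a)
    have hsup : (tSum fun l' => tSum fun m' => sneg m' + tpow R pq.1 m' l') +
          (tSum fun a' => tSum fun b' => tpow R pq.2 a' b' + g b')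
        ≤ (pairSet n).sup fun ij =>
          (tSum fun l' => tSum fun m' => sneg m' + tpow R ij.1 m' l') +
            (tSum fun a' => tSum fun b' => tpow R ij.2 a' b' + g b') :=
      Finset.le_sup (f := fun ij : ℕ × ℕ =>
        (tSum fun l' => tSum fun m' => sneg m' + tpow R ij.1 m' l') +
          (tSum fun a' => tSum fun b' => tpow R ij.2 a' b' + g b')) hmem
    exact le_trans (add_le_add hA hBb) (hsup.trans hpair)
  · have hre3 : sneg m + (kstar R m b + kstar R a l) + g b
        = (sneg m + (kstar R m b + g b)) + kstar R a l := by abel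
    rw [hre3]
    have hz : sneg m + (kstar R m b + g b) ≤ 0 := by
      have h1 : kstar R m b + g b ≤ tSum fun l' => kstar R m l' + g l' :=
        le_tSum (fun l' => kstar R m l' + g l') b
      exact le_trans (le_trans (add_le_add_right h1 _)
        (le_tSum (fun j => sneg j + tSum fun l' => kstar R j l' + g l') m)) hfeas
    have hk : kstar R a l ≤ θ :=
      le_trans (le_trans (le_tSum (fun b' => kstar R a b') l)
        (le_tSum (fun a' => tSum fun b' => kstar R a' b') a)) hK
    calc (sneg m + (kstar R m b + g b)) + kstar R a l ≤ 0 + θ := add_le_add hz hk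
      _ = θ := zero_add θ

end TDS

/-- Deviation scheduling theorem: the minimum of x⁻ 1 1ᵀ x (maximum absolute
deviation of start times) over regular x with Bx ≤ x, D(Cx) ≤ x, g ≤ x ≤ h,
Cx ≤ f equals θ = ⊕_{0≤i+j≤n−2} ‖s⁻R^i‖ ‖R^j g‖ ⊕ ‖R*‖. -/
theorem tropical_deviation_scheduling {n : ℕ}
    (B D C : Matrix (Fin n) (Fin n) T) (hC : ∀ j, ∃ i, C i j ≠ ⊥)
    (g : Fin n → T) (f h : Fin n → ℝ)
    (R : Matrix (Fin n) (Fin n) T)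
    (hRdef : R = fun i j => max (B i j) (tMulM D C i j))
    (hTr : TrB R ≤ 0)
    (sneg : Fin n → T)
    (hsdef : sneg = fun j =>
      max (tSum fun i => ((-(f i) : ℝ) : T) + C i j) ((-(h j) : ℝ) : T))
    (hfeas : tSum (fun j => sneg j + tSum fun l => kstar R j l + g l) ≤ 0)
    (θ : T)
    (hθdef : θ = max
      ((pairSet n).sup fun ij =>
        (tSum fun l => tSum fun m => sneg m + tpow R ij.1 m l) +
          (tSum fun a => tSum fun b => tpow R ij.2 a b + g b))
      (tSum fun a => tSum fun b => kstar R a b)) :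
    IsLeast {v : T | ∃ x : Fin n → ℝ,
      (∀ i, tSum (fun j => B i j + (x j : T)) ≤ (x i : T)) ∧
      (∀ i, tSum (fun j => D i j + tSum fun l => C j l + (x l : T)) ≤ (x i : T)) ∧
      (∀ i, g i ≤ (x i : T)) ∧ (∀ i, x i ≤ h i) ∧
      (∀ i, tSum (fun j => C i j + (x j : T)) ≤ (f i : T)) ∧
      (tSum fun i => ((x i : ℝ) : T)) + (tSum fun i => ((-(x i) : ℝ) : T)) = v} θ := by
  constructor
  case right =>
    rintro v ⟨x, h1, h2, h3, h4, h5, rfl⟩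
    exact TDS.lower_bound B D C g f h R hRdef sneg hsdef θ hθdef x h1 h2 h3 h4 h5
  case left =>
    rcases Nat.eq_zero_or_pos n with hn0 | hn0
    · subst hn0
      refine ⟨fun i => i.elim0, fun i => i.elim0, fun i => i.elim0, fun i => i.elim0,
        fun i => i.elim0, fun i => i.elim0, ?_⟩
      rw [hθdef]
      have h0 : pairSet 0 = ∅ := by simp [pairSet]
      simp [h0, tSum]
    · -- n ≥ 1 : build an optimal solution
      have hsneg_lb : ∀ j, ((-(h j) : ℝ) : T) ≤ sneg j := by
        intro j; rw [hsdef]; exact le_max_right _ _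
      have hsneg_ne : ∀ j, sneg j ≠ ⊥ := by
        intro j hb
        have hle := hsneg_lb j
        rw [hb, le_bot_iff] at hle
        exact WithBot.coe_ne_bot hle
      have hdiag : ∀ a, (0 : T) ≤ kstar R a a := by
        intro a
        refine le_trans ?_ (TDS.le_tSum (fun t : Fin n => tpow R (t : ℕ) a a) ⟨0, hn0⟩)
        simp [tpow, tId]
      set j0 : Fin n := ⟨0, hn0⟩ with hj0
      obtain ⟨γ, hγ⟩ : ∃ r : ℝ,
          (tSum fun l => tSum fun m => sneg m + kstar R m l) = (r : T) := by
        have h2 : sneg j0 ≤ tSum fun l => tSum fun m => sneg m + kstar R m l := by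
          calc sneg j0 = sneg j0 + 0 := (add_zero _).symm
            _ ≤ sneg j0 + kstar R j0 j0 := add_le_add_right (hdiag j0) _
            _ ≤ tSum (fun m => sneg m + kstar R m j0) :=
                TDS.le_tSum (fun m => sneg m + kstar R m j0) j0
            _ ≤ _ := TDS.le_tSum (fun l => tSum fun m => sneg m + kstar R m l) j0
        have hne : (tSum fun l => tSum fun m => sneg m + kstar R m l) ≠ ⊥ := by
          intro hb
          rw [hb, le_bot_iff] at h2
          exact hsneg_ne j0 h2
        obtain ⟨r, hr⟩ := WithBot.ne_bot_iff_exists.mp hne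
        exact ⟨r, hr.symm⟩
      set w : Fin n → T := fun b => max (g b) ((-γ : ℝ) : T) with hw
      set X : Fin n → T := fun a => tSum fun b => kstar R a b + w b with hXdef
      have hXlb : ∀ a, ((-γ : ℝ) : T) ≤ X a := by
        intro a
        simp only [hXdef]
        refine le_trans ?_ (TDS.le_tSum (fun b => kstar R a b + w b) a)
        calc ((-γ : ℝ) : T) = 0 + ((-γ : ℝ) : T) := (zero_add _).symm
          _ ≤ kstar R a a + w a :=
            add_le_add (hdiag a) (by simp only [hw]; exact le_max_right _ _)
      have hXne : ∀ a, X a ≠ ⊥ := by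
        intro a hb
        have hle := hXlb a
        rw [hb, le_bot_iff] at hle
        exact WithBot.coe_ne_bot hle
      choose x hx using fun a => WithBot.ne_bot_iff_exists.mp (hXne a)
      -- hx : ∀ a, ↑(x a) = X a
      have hRX : ∀ i, TDS.vApp R X i ≤ X i := by
        intro i
        have he : TDS.vApp R X i = TDS.vApp (tMulM R (kstar R)) w i := by
          simp only [hXdef]
          rw [TDS.vApp_assoc R (kstar R) w]
          rfl
        rw [he]
        refine le_trans (TDS.vApp_mono_mat (fun i' j' => TDS.mul_kstar_le R hTr i' j') w i) ?_
        show TDS.vApp (kstar R) w i ≤ X i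
        simp only [hXdef]
        exact le_rfl
      have hsX : ∀ j, sneg j + X j ≤ 0 := by
        intro j
        simp only [hXdef]
        rw [TDS.tSum_add_left]
        apply TDS.tSum_le
        intro b
        rw [← add_assoc]
        simp only [hw]
        rw [TDS.add_max_left]
        apply max_le
        · calc (sneg j + kstar R j b) + g b = sneg j + (kstar R j b + g b) := add_assoc _ _ _
            _ ≤ sneg j + tSum (fun l => kstar R j l + g l) :=
                add_le_add_right (TDS.le_tSum (fun l => kstar R j l + g l) b) _
            _ ≤ tSum (fun j' => sneg j' + tSum fun l => kstar R j' l + g l) :=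
                TDS.le_tSum (fun j' => sneg j' + tSum fun l => kstar R j' l + g l) j
            _ ≤ 0 := hfeas
        · have h1 : sneg j + kstar R j b ≤ (γ : T) := by
            rw [← hγ]
            exact le_trans (TDS.le_tSum (fun m => sneg m + kstar R m b) j)
              (TDS.le_tSum (fun l => tSum fun m => sneg m + kstar R m l) b)
          calc (sneg j + kstar R j b) + ((-γ : ℝ) : T) ≤ (γ : T) + ((-γ : ℝ) : T) :=
              add_le_add_left h1 _
            _ = 0 := TDS.coe_add_neg_cancel γ
      -- the five constraints
      have hB' : ∀ i, tSum (fun j => B i j + ((x j : ℝ) : T)) ≤ ((x i : ℝ) : T) := by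
        intro i
        simp only [hx]
        apply TDS.tSum_le
        intro j
        have h1 : B i j ≤ R i j := by rw [hRdef]; exact le_max_left _ _
        exact le_trans (add_le_add_left h1 _)
          (le_trans (TDS.le_tSum (fun j' => R i j' + X j') j) (hRX i))
      have hD' : ∀ i, tSum (fun j => D i j + tSum fun l => C j l + ((x l : ℝ) : T))
          ≤ ((x i : ℝ) : T) := by
        intro i
        simp only [hx]
        have he : (tSum fun j => D i j + tSum fun l => C j l + X l)
            = TDS.vApp (tMulM D C) X i := by
          rw [TDS.vApp_assoc]
          rfl
        rw [he]
        refine le_trans (TDS.vApp_mono_mat (fun i' j' => ?_) X i) (hRX i)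
        rw [hRdef]
        exact le_max_right _ _
      have hg' : ∀ i, g i ≤ ((x i : ℝ) : T) := by
        intro i
        rw [hx i]
        simp only [hXdef]
        refine le_trans ?_ (TDS.le_tSum (fun b => kstar R i b + w b) i)
        calc g i = 0 + g i := (zero_add _).symm
          _ ≤ kstar R i i + w i :=
            add_le_add (hdiag i) (by simp only [hw]; exact le_max_left _ _)
      have hh' : ∀ i, x i ≤ h i := by
        intro i
        have h1 : ((-(h i) : ℝ) : T) + X i ≤ 0 :=
          le_trans (add_le_add_left (hsneg_lb i) _) (hsX i)
        rw [← hx i, ← WithBot.coe_add] at h1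
        have h2 : -(h i) + x i ≤ (0 : ℝ) := by exact_mod_cast h1
        linarith
      have hf' : ∀ i, tSum (fun j => C i j + ((x j : ℝ) : T)) ≤ ((f i : ℝ) : T) := by
        intro i
        simp only [hx]
        apply TDS.tSum_le
        intro j
        have h1 : ((-(f i) : ℝ) : T) + C i j ≤ sneg j := by
          rw [hsdef]
          exact le_trans (TDS.le_tSum (fun i' => ((-(f i') : ℝ) : T) + C i' j) i)
            (le_max_left _ _)
        have h2 : ((-(f i) : ℝ) : T) + (C i j + X j) ≤ 0 := by
          rw [← add_assoc]
          exact le_trans (add_le_add_left h1 _) (hsX j)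
        exact TDS.neg_coe_add_le_zero h2
      -- the objective value is at most θ
      have hKle : (tSum fun a => tSum fun b => kstar R a b) ≤ θ := by
        rw [hθdef]; exact le_max_right _ _
      have hM : (tSum fun i => ((x i : ℝ) : T)) ≤
          max (tSum fun a => tSum fun b => kstar R a b + g b)
            (((-γ : ℝ) : T) + tSum fun a => tSum fun b => kstar R a b) := by
        apply TDS.tSum_le
        intro a
        rw [hx a]
        simp only [hXdef]
        apply TDS.tSum_le
        intro b
        simp only [hw]
        rw [TDS.add_max_left]
        apply max_le
        · exact le_trans (TDS.le_tSum (fun b' => kstar R a b' + g b') b)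
            (le_trans (TDS.le_tSum (fun a' => tSum fun b' => kstar R a' b' + g b') a)
              (le_max_left _ _))
        · refine le_trans ?_ (le_max_right _ _)
          rw [add_comm]
          exact add_le_add_right (le_trans (TDS.le_tSum (fun b' => kstar R a b') b)
            (TDS.le_tSum (fun a' => tSum fun b' => kstar R a' b') a)) _
      have hN : (tSum fun i => ((-(x i) : ℝ) : T)) ≤ (γ : T) := by
        apply TDS.tSum_le
        intro a
        have h1 : ((-γ : ℝ) : T) ≤ ((x a : ℝ) : T) := by rw [hx a]; exact hXlb a
        have h2 := WithBot.coe_le_coe.mp h1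
        exact WithBot.coe_le_coe.mpr (by linarith)
      have hKg : (tSum fun a => tSum fun b => kstar R a b + g b) + (γ : T) ≤ θ := by
        rw [← hγ, TDS.tSum_add_left]
        apply TDS.tSum_le
        intro l
        rw [TDS.tSum_add_left]
        apply TDS.tSum_le
        intro m
        rw [TDS.tSum_add_right]
        apply TDS.tSum_le
        intro a
        rw [TDS.tSum_add_right]
        apply TDS.tSum_le
        intro b
        show ((tSum fun q : Fin n => tpow R (q : ℕ) a b) + g b) + (sneg m + kstar R m l) ≤ θ
        rw [TDS.tSum_add_right, TDS.tSum_add_right]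
        apply TDS.tSum_le
        intro q
        show (tpow R (q : ℕ) a b + g b) +
            (sneg m + tSum fun p : Fin n => tpow R (p : ℕ) m l) ≤ θ
        rw [TDS.tSum_add_left, TDS.tSum_add_left]
        apply TDS.tSum_le
        intro p
        exact TDS.key_pair_bound R hTr sneg g hfeas θ
          (by rw [hθdef]; exact le_max_left _ _) hKle (p : ℕ) (q : ℕ) m l a b
      have hval : (tSum fun i => ((x i : ℝ) : T)) + (tSum fun i => ((-(x i) : ℝ) : T)) ≤ θ := by
        refine le_trans (add_le_add hM hN) ?_
        rw [TDS.max_add_right]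
        apply max_le
        · exact hKg
        · rw [TDS.neg_add_cancel_right (tSum fun a => tSum fun b => kstar R a b) γ]
          exact hKle
      refine ⟨x, hB', hD', hg', hh', hf', ?_⟩
      exact le_antisymm hval
        (TDS.lower_bound B D C g f h R hRdef sneg hsdef θ hθdef x hB' hD' hg' hh' hf')
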